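/- arXiv:1109.2248 — 4 statements merged into one kernel-verified Lean document; each statement's English description precedes it below -/
import Mathlib

section
/- Let S ⊂ ℝ^n be a d-set with 0<d<n. Then S is porous: there exists κ ≥ 1 such that for every cube Q(x,r) with x ∈ ℝ^n and 0<r≤1, there exists y ∈ Q(x,r) with Q(y, r/κ) ∩ S = ∅. -/
open Metric MeasureTheory
open scoped ENNReal

/-- A `d`-set `S ⊆ ℝⁿ` with `0 < d < n` is porous: there is `κ ≥ 1` such that every cube
`Q(x,r)` (closed sup-norm ball) with `0 < r ≤ 1` contains a point `y` with
`Q(y, r/κ) ∩ S = ∅`. -/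
theorem stmt_4 (n : ℕ) (d : ℝ) (hd0 : 0 < d) (hdn : d < n)
    (S : Set (Fin n → ℝ)) (hScl : IsClosed S)
    (c₁ c₂ : ℝ≥0∞) (hc₁ : 0 < c₁) (hc₂ : c₂ ≠ ∞)
    (hreg : ∀ w ∈ S, ∀ r : ℝ, 0 < r → r ≤ 1 →
      c₁ * ENNReal.ofReal r ^ d ≤ μH[d] (closedBall w r ∩ S) ∧
        μH[d] (closedBall w r ∩ S) ≤ c₂ * ENNReal.ofReal r ^ d) :
    ∃ κ : ℝ, 1 ≤ κ ∧ ∀ (x : Fin n → ℝ) (r : ℝ), 0 < r → r ≤ 1 →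
      ∃ y ∈ closedBall x r, closedBall y (r / κ) ∩ S = ∅ := by
  classical
  set ε : ℝ≥0∞ := min c₁ 1 with hεdef
  have hε0 : ε ≠ 0 := (lt_min hc₁ one_pos).ne'
  have hεtop : ε ≠ ∞ := ((min_le_right c₁ 1).trans_lt ENNReal.one_lt_top).ne
  have hεc₁ : ε ≤ c₁ := min_le_left _ _
  have hdn' : d < (n:ℝ) := hdn
  have hp : (0:ℝ) < (n:ℝ) - d := by linarith
  -- choose the number of grid points per coordinate
  obtain ⟨m, hm, hm1⟩ : ∃ m : ℕ,
      ((c₂ * ε⁻¹).toReal + 1) * (64:ℝ) ^ d < (m:ℝ) ^ ((n:ℝ) - d) ∧ 1 ≤ m := by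
    have h1 : Filter.Tendsto (fun m : ℕ => (m:ℝ) ^ ((n:ℝ) - d)) Filter.atTop Filter.atTop :=
      (tendsto_rpow_atTop hp).comp tendsto_natCast_atTop_atTop
    exact ((h1.eventually_gt_atTop _).and (Filter.eventually_ge_atTop 1)).exists
  have hm0 : (0:ℝ) < m := by exact_mod_cast hm1
  have h64m : (0:ℝ) < 64 * m := by positivity
  -- the key numerical inequality
  have hkey : c₂ < (m:ℝ≥0∞) ^ n * c₁ * ENNReal.ofReal ((64*(m:ℝ))⁻¹) ^ d := by
    have h64d : (0:ℝ) < (64:ℝ) ^ d := Real.rpow_pos_of_pos (by norm_num) d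
    have hmd : (0:ℝ) < (m:ℝ) ^ d := Real.rpow_pos_of_pos hm0 d
    have hV : (m:ℝ) ^ n * ((64*(m:ℝ))⁻¹) ^ d = (m:ℝ) ^ ((n:ℝ) - d) * ((64:ℝ) ^ d)⁻¹ := by
      rw [Real.inv_rpow h64m.le, Real.mul_rpow (by norm_num : (0:ℝ) ≤ 64) hm0.le,
        ← Real.rpow_natCast (m:ℝ) n]
      have hnn : ((n:ℕ):ℝ) = ((n:ℝ) - d) + d := by ring
      rw [hnn, Real.rpow_add hm0]
      field_simp
      ring
    have htoR : c₂ * ε⁻¹ ≠ ∞ := ENNReal.mul_ne_top hc₂ (ENNReal.inv_ne_top.mpr hε0)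
    have hVC : (c₂ * ε⁻¹).toReal < (m:ℝ) ^ n * ((64*(m:ℝ))⁻¹) ^ d := by
      rw [hV]
      have hrw : (m:ℝ) ^ ((n:ℝ) - d) * ((64:ℝ) ^ d)⁻¹ = (m:ℝ) ^ ((n:ℝ) - d) / (64:ℝ) ^ d :=
        (div_eq_mul_inv _ _).symm
      rw [hrw, lt_div_iff₀ h64d]
      nlinarith [ENNReal.toReal_nonneg (a := c₂ * ε⁻¹)]
    have hlt : c₂ * ε⁻¹ < ENNReal.ofReal ((m:ℝ) ^ n * ((64*(m:ℝ))⁻¹) ^ d) :=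
      (ENNReal.lt_ofReal_iff_toReal_lt htoR).mpr hVC
    have hofV : ENNReal.ofReal ((m:ℝ) ^ n * ((64*(m:ℝ))⁻¹) ^ d)
        = (m:ℝ≥0∞) ^ n * ENNReal.ofReal ((64*(m:ℝ))⁻¹) ^ d := by
      rw [ENNReal.ofReal_mul (by positivity), ← ENNReal.ofReal_rpow_of_pos (by positivity),
        ENNReal.ofReal_pow (by positivity : (0:ℝ) ≤ (m:ℝ)), ENNReal.ofReal_natCast]
    calc c₂ = c₂ * ε⁻¹ * ε := by rw [mul_assoc, ENNReal.inv_mul_cancel hε0 hεtop, mul_one]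
      _ < ENNReal.ofReal ((m:ℝ) ^ n * ((64*(m:ℝ))⁻¹) ^ d) * ε :=
          ENNReal.mul_lt_mul_left hε0 hεtop hlt
      _ ≤ ENNReal.ofReal ((m:ℝ) ^ n * ((64*(m:ℝ))⁻¹) ^ d) * c₁ := mul_le_mul_right hεc₁ _
      _ = (m:ℝ≥0∞) ^ n * c₁ * ENNReal.ofReal ((64*(m:ℝ))⁻¹) ^ d := by rw [hofV]; ring
  -- the porosity constant
  have hm1' : (1:ℝ) ≤ (m:ℝ) := by exact_mod_cast hm1
  refine ⟨32 * m, by linarith, ?_⟩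
  intro x r hr hr1
  by_contra hcon
  push_neg at hcon
  have hne : ∀ y ∈ closedBall x r, (closedBall y (r / (32 * (m:ℝ))) ∩ S).Nonempty := hcon
  set t : ℝ := r / (32 * m) with htdef
  have ht0 : 0 < t := by positivity
  have htr : t ≤ r / 32 := by
    apply div_le_div_of_nonneg_left hr.le (by norm_num)
    nlinarith
  -- the grid
  set p : (Fin n → Fin m) → Fin n → ℝ :=
    fun j i => x i + (-(r/8) + (2*((j i : ℕ) : ℝ)+1) * (r/(8*m))) with hpdef
  have hju : ∀ (j : Fin n → Fin m) (i : Fin n), ((j i : ℕ) : ℝ) + 1 ≤ (m:ℝ) := by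
    intro j i
    exact_mod_cast (j i).is_lt
  have hpx : ∀ j, p j ∈ closedBall x (r/8) := by
    intro j
    rw [mem_closedBall, dist_pi_le_iff (by positivity)]
    intro i
    have hji := hju j i
    rw [Real.dist_eq]
    have hsub : p j i - x i = -(r/8) + (2*((j i : ℕ):ℝ)+1) * (r/(8*m)) := by
      simp only [hpdef]; ring
    rw [hsub, abs_le]
    have hpos : (0:ℝ) ≤ (2*((j i : ℕ):ℝ)+1) * (r/(8*m)) := by positivity
    have hm8 : 2*(m:ℝ) * (r/(8*m)) = r/4 := by field_simp; ring
    have hle : (2*((j i : ℕ):ℝ)+1) * (r/(8*m)) ≤ 2*(m:ℝ) * (r/(8*m)) := by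
      apply mul_le_mul_of_nonneg_right (by linarith) (by positivity)
    constructor <;> [linarith; linarith]
  -- pick points of S near the grid
  have hpx' : ∀ j, p j ∈ closedBall x r :=
    fun j => closedBall_subset_closedBall (by linarith) (hpx j)
  choose w hw using fun j => hne (p j) (hpx' j)
  have hwb : ∀ j, dist (w j) (p j) ≤ t := fun j => (hw j).1
  have hwS : ∀ j, w j ∈ S := fun j => (hw j).2
  obtain ⟨w₀, hw₀b, hw₀S⟩ := hne x (mem_closedBall_self hr.le)
  rw [mem_closedBall] at hw₀b
  -- the disjoint family
  set B : (Fin n → Fin m) → Set (Fin n → ℝ) :=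
    fun j => closedBall (w j) (t/2) ∩ S with hBdef
  have hsep : ∀ j k : Fin n → Fin m, j ≠ k → 8 * t ≤ dist (p j) (p k) := by
    intro j k hjk
    obtain ⟨i, hi⟩ := Function.ne_iff.mp hjk
    refine le_trans ?_ (dist_le_pi_dist (p j) (p k) i)
    rw [Real.dist_eq]
    have hsub : p j i - p k i = (((j i : ℕ):ℝ) - ((k i : ℕ):ℝ)) * (2 * (r/(8*m))) := by
      simp only [hpdef]; ring
    rw [hsub, abs_mul]
    have h2 : (1:ℤ) ≤ |((j i : ℕ) : ℤ) - ((k i : ℕ) : ℤ)| := by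
      have hne' : (j i : ℕ) ≠ (k i : ℕ) := fun h => hi (Fin.val_injective h)
      refine Int.one_le_abs (sub_ne_zero.mpr ?_)
      exact_mod_cast hne'
    have h1 : (1:ℝ) ≤ |((j i : ℕ):ℝ) - ((k i : ℕ):ℝ)| := by
      calc (1:ℝ) = ((1:ℤ):ℝ) := by norm_num
        _ ≤ (|((j i : ℕ) : ℤ) - ((k i : ℕ) : ℤ)| : ℤ) := by exact_mod_cast h2
        _ = |((j i : ℕ):ℝ) - ((k i : ℕ):ℝ)| := by push_cast; ring_nf
    have habs : |2 * (r/(8*m))| = 2 * (r/(8*m)) := abs_of_nonneg (by positivity)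
    rw [habs]
    have h8t : 8 * t = 1 * (2 * (r/(8*m))) := by
      rw [htdef]; field_simp; ring
    rw [h8t]
    apply mul_le_mul_of_nonneg_right h1 (by positivity)
  have hdisj : ∀ j k : Fin n → Fin m, j ≠ k → Disjoint (B j) (B k) := by
    intro j k hjk
    have h1 := hsep j k hjk
    have h2 := dist_triangle4 (p j) (w j) (w k) (p k)
    have h3 : dist (p j) (w j) ≤ t := by rw [dist_comm]; exact hwb j
    have h4 : dist (w k) (p k) ≤ t := hwb k
    have h5 : t/2 + t/2 < dist (w j) (w k) := by linarith
    exact Disjoint.mono Set.inter_subset_left Set.inter_subset_left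
      (closedBall_disjoint_closedBall h5)
  have hBmeas : ∀ j, MeasurableSet (B j) :=
    fun j => measurableSet_closedBall.inter hScl.measurableSet
  have hsum : μH[d] (⋃ j ∈ (Finset.univ : Finset (Fin n → Fin m)), B j)
      = ∑ j : Fin n → Fin m, μH[d] (B j) :=
    measure_biUnion_finset (fun j _ k _ hjk => hdisj j k hjk) (fun j _ => hBmeas j)
  have ht1 : t/2 ≤ 1 := by linarith
  have hlow : ∀ j, c₁ * ENNReal.ofReal (t/2) ^ d ≤ μH[d] (B j) := fun j =>
    (hreg (w j) (hwS j) (t/2) (by positivity) ht1).1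
  have hcard : ((Finset.univ : Finset (Fin n → Fin m)).card) •
      (c₁ * ENNReal.ofReal (t/2) ^ d) ≤ ∑ j : Fin n → Fin m, μH[d] (B j) :=
    Finset.card_nsmul_le_sum Finset.univ _ _ (fun j _ => hlow j)
  have hsubset : (⋃ j ∈ (Finset.univ : Finset (Fin n → Fin m)), B j) ⊆ closedBall w₀ r ∩ S := by
    intro z hz
    simp only [Set.mem_iUnion, Finset.mem_univ, exists_prop, true_and] at hz
    obtain ⟨j, hzj, hzS⟩ := hz
    rw [mem_closedBall] at hzj
    refine ⟨?_, hzS⟩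
    rw [mem_closedBall]
    have d1 : dist z (p j) ≤ dist z (w j) + dist (w j) (p j) := dist_triangle _ _ _
    have d2 : dist z w₀ ≤ dist z (p j) + dist (p j) x + dist x w₀ := dist_triangle4 _ _ _ _
    have d3 : dist (p j) x ≤ r/8 := hpx j
    have d4 : dist x w₀ ≤ t := by rw [dist_comm]; exact hw₀b
    have d5 := hwb j
    linarith
  have hup : μH[d] (⋃ j ∈ (Finset.univ : Finset (Fin n → Fin m)), B j)
      ≤ c₂ * ENNReal.ofReal r ^ d :=
    le_trans (measure_mono hsubset) (hreg w₀ hw₀S r hr hr1).2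
  have hmain : (m:ℝ≥0∞) ^ n * (c₁ * ENNReal.ofReal (t/2) ^ d) ≤ c₂ * ENNReal.ofReal r ^ d := by
    have hcard' : (Finset.univ : Finset (Fin n → Fin m)).card = m ^ n := by
      simp [Fintype.card_fun]
    rw [hcard', nsmul_eq_mul] at hcard
    push_cast at hcard
    exact le_trans hcard (le_trans (le_of_eq hsum.symm) hup)
  have htr2 : t/2 = r * (64*(m:ℝ))⁻¹ := by
    rw [htdef]; field_simp; ring
  have hRsplit : ENNReal.ofReal (t/2) ^ d
      = ENNReal.ofReal r ^ d * ENNReal.ofReal ((64*(m:ℝ))⁻¹) ^ d := by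
    rw [htr2, ENNReal.ofReal_mul hr.le, ENNReal.mul_rpow_of_nonneg _ _ hd0.le]
  rw [hRsplit] at hmain
  have hR0 : (ENNReal.ofReal r) ^ d ≠ 0 :=
    (ENNReal.rpow_pos (ENNReal.ofReal_pos.mpr hr) ENNReal.ofReal_ne_top).ne'
  have hRtop : (ENNReal.ofReal r) ^ d ≠ ∞ :=
    ENNReal.rpow_ne_top_of_nonneg hd0.le ENNReal.ofReal_ne_top
  have hfinal : (m:ℝ≥0∞) ^ n * c₁ * ENNReal.ofReal ((64*(m:ℝ))⁻¹) ^ d ≤ c₂ := by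
    rw [← ENNReal.mul_le_mul_iff_left hR0 hRtop]
    calc (m:ℝ≥0∞) ^ n * c₁ * ENNReal.ofReal ((64*(m:ℝ))⁻¹) ^ d * ENNReal.ofReal r ^ d
        = (m:ℝ≥0∞) ^ n * (c₁ * (ENNReal.ofReal r ^ d * ENNReal.ofReal ((64*(m:ℝ))⁻¹) ^ d)) := by
          ring
      _ ≤ c₂ * ENNReal.ofReal r ^ d := hmain
  exact absurd hfinal hkey.not_ge
end

section
/- Let S ⊂ ℝ^n be κ-porous, γ>0, and σ = 16κ(1+γ). Let C_{S,γ} be the family of dyadic cubes Q with γ^{-1} dist(x_Q,S) ≤ ℓ(Q) ≤ 1 (x_Q the center, ℓ(Q) the side length, distance in the sup-norm). Then for every Q ∈ C_{S,γ} there exists a dyadic cube r(Q) ⊂ int(Q) with ℓ(Q) ≤ σ ℓ(r(Q)) and ℓ(Q)/σ ≤ dist(x,S) ≤ σ ℓ(Q) for every x ∈ r(Q). -/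
set_option maxHeartbeats 1000000

open Metric

/-- The center of the closed dyadic cube of generation `j` indexed by `k : Fin n → ℤ`. -/
noncomputable def dyCenter (n : ℕ) (j : ℤ) (k : Fin n → ℤ) : Fin n → ℝ :=
  fun i => ((k i : ℝ) + 1 / 2) * 2 ^ (-j)

/-- The closed dyadic cube of side length `2^(-j)` indexed by `k : Fin n → ℤ`, realized as
a closed sup-norm ball of radius `2^(-j)/2` around its center. -/
noncomputable def dyCube (n : ℕ) (j : ℤ) (k : Fin n → ℤ) : Set (Fin n → ℝ) :=
  closedBall (dyCenter n j k) (2 ^ (-j) / 2)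

private lemma mem_dyCube_iff {n : ℕ} {j : ℤ} {k : Fin n → ℤ} {x : Fin n → ℝ} :
    x ∈ dyCube n j k ↔
      ∀ i, (k i : ℝ) * 2 ^ (-j) ≤ x i ∧ x i ≤ ((k i : ℝ) + 1) * 2 ^ (-j) := by
  have h2 : (0:ℝ) < 2 ^ (-j) := by positivity
  rw [dyCube, mem_closedBall, dist_pi_le_iff (by positivity)]
  refine forall_congr' fun i => ?_
  rw [Real.dist_eq, abs_le, dyCenter]
  constructor <;> rintro ⟨h1, h2'⟩ <;> constructor <;> nlinarith

/-- For a nonempty `κ`-porous set `S ⊆ ℝⁿ`, `γ > 0` and `σ = 16κ(1+γ)`: every dyadic cube `Q`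
with `γ⁻¹ dist(x_Q,S) ≤ ℓ(Q) ≤ 1` contains a dyadic cube `r(Q) ⊆ int Q` with
`ℓ(Q) ≤ σ ℓ(r(Q))` and `ℓ(Q)/σ ≤ dist(x,S) ≤ σ ℓ(Q)` for all `x ∈ r(Q)`. -/
theorem stmt_5 (n : ℕ) (S : Set (Fin n → ℝ)) (hSne : S.Nonempty)
    (κ : ℝ) (hκ : 1 ≤ κ)
    (hpor : ∀ (x : Fin n → ℝ) (r : ℝ), 0 < r → r ≤ 1 →
      ∃ y ∈ closedBall x r, closedBall y (r / κ) ∩ S = ∅)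
    (γ : ℝ) (hγ : 0 < γ) (j : ℤ) (k : Fin n → ℤ)
    (hQ : γ⁻¹ * infDist (dyCenter n j k) S ≤ 2 ^ (-j) ∧ (2 : ℝ) ^ (-j) ≤ 1) :
    ∃ (j' : ℤ) (k' : Fin n → ℤ),
      dyCube n j' k' ⊆ interior (dyCube n j k) ∧
      (2 : ℝ) ^ (-j) ≤ 16 * κ * (1 + γ) * 2 ^ (-j') ∧
      ∀ x ∈ dyCube n j' k',
        (2 : ℝ) ^ (-j) / (16 * κ * (1 + γ)) ≤ infDist x S ∧
        infDist x S ≤ 16 * κ * (1 + γ) * 2 ^ (-j) := by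
  obtain ⟨hdist, hle1⟩ := hQ
  have hκ0 : (0:ℝ) < κ := lt_of_lt_of_le one_pos hκ
  set c := dyCenter n j k with hc
  set ℓ : ℝ := 2 ^ (-j) with hℓdef
  have hℓpos : 0 < ℓ := by positivity
  -- choose the scale m with 8κ < 2^m ≤ 16κ
  obtain ⟨m0, hm1, hm2⟩ :=
    exists_nat_pow_near (x := 8*κ) (y := (2:ℝ)) (by linarith) one_lt_two
  set m : ℕ := m0 + 1 with hm
  set E : ℝ := 2 ^ m with hE
  have hE1 : 8 * κ < E := hm2
  have hE2 : E ≤ 16 * κ := by rw [hE, hm, pow_succ]; linarith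
  have hE8 : (8:ℝ) < E := by nlinarith
  have hEpos : (0:ℝ) < E := by positivity
  set j' : ℤ := j + m with hj'
  set L : ℝ := 2 ^ (-j') with hL
  have hLpos : 0 < L := by positivity
  have hLE : L * E = ℓ := by
    rw [hL, hE, hℓdef, ← zpow_natCast (2:ℝ) m, ← zpow_add₀ (two_ne_zero : (2:ℝ) ≠ 0)]
    congr 1
    omega
  have hLinv : (2:ℝ) ^ j' * L = 1 := by
    rw [hL, ← zpow_add₀ (two_ne_zero : (2:ℝ) ≠ 0)]
    simp
  have hkey : ∀ z : ℝ, z * 2 ^ j' * L = z := by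
    intro z; rw [mul_assoc, hLinv, mul_one]
  have h2j'pos : (0:ℝ) < 2 ^ j' := by positivity
  have hℓE : ℓ * (2:ℝ) ^ j' = E := by
    rw [← hLE]; nlinarith [hkey E]
  have hLval : L = ℓ / E := by
    rw [eq_div_iff hEpos.ne']; exact hLE
  -- porosity at the center
  obtain ⟨y, hy, hyS⟩ := hpor c (ℓ/2) (by positivity) (by linarith)
  have hyd : ℓ / (2*κ) ≤ infDist y S := by
    rw [infDist_eq_iInf]
    have : Nonempty S := hSne.to_subtype
    refine le_ciInf fun s => ?_
    have hs : (s : Fin n → ℝ) ∉ closedBall y (ℓ/2/κ) := fun h =>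
      Set.eq_empty_iff_forall_notMem.1 hyS s ⟨h, s.2⟩
    rw [mem_closedBall] at hs
    push_neg at hs
    rw [div_div] at hs
    rw [dist_comm]
    linarith
  have hyi : ∀ i, (k i : ℝ) * ℓ ≤ y i ∧ y i ≤ ((k i : ℝ) + 1) * ℓ :=
    mem_dyCube_iff.1 hy
  -- floors of y at scale j'
  set t : Fin n → ℤ := fun i => ⌊y i * 2 ^ j'⌋ with ht
  have hfloor : ∀ i, (t i : ℝ) * L ≤ y i ∧ y i < ((t i : ℝ) + 1) * L := by
    intro i
    have h1 := Int.floor_le (y i * 2 ^ j')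
    have h2 := Int.lt_floor_add_one (y i * 2 ^ j')
    have h1' := mul_le_mul_of_nonneg_right h1 hLpos.le
    have h2' := mul_lt_mul_of_pos_right h2 hLpos
    rw [hkey] at h1' h2'
    exact ⟨h1', h2'⟩
  have htlo : ∀ i, k i * 2 ^ m ≤ t i := by
    intro i
    refine Int.le_floor.2 ?_
    push_cast
    have h' := mul_le_mul_of_nonneg_right (hyi i).1 h2j'pos.le
    calc (k i : ℝ) * 2 ^ m = (k i) * (ℓ * 2 ^ j') := by rw [hℓE, ← hE]
      _ = (k i) * ℓ * 2 ^ j' := by ring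
      _ ≤ y i * 2 ^ j' := h'
  have hthi : ∀ i, t i ≤ k i * 2 ^ m + 2 ^ m := by
    intro i
    have hub : y i * 2 ^ j' ≤ ((k i * 2 ^ m + 2 ^ m : ℤ) : ℝ) := by
      push_cast
      have h' := mul_le_mul_of_nonneg_right (hyi i).2 h2j'pos.le
      calc y i * 2 ^ j' ≤ ((k i : ℝ) + 1) * ℓ * 2 ^ j' := h'
        _ = ((k i : ℝ) + 1) * (ℓ * 2 ^ j') := by ring
        _ = (k i : ℝ) * 2 ^ m + 2 ^ m := by rw [hℓE, ← hE]; ring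
    calc t i ≤ ⌊((k i * 2 ^ m + 2 ^ m : ℤ) : ℝ)⌋ := Int.floor_mono hub
      _ = k i * 2 ^ m + 2 ^ m := Int.floor_intCast _
  have hm3 : (3:ℤ) ≤ 2 ^ m := by
    have : (3:ℝ) ≤ 2 ^ m := by rw [← hE]; linarith
    exact_mod_cast this
  -- the index of the small cube
  set k' : Fin n → ℤ :=
    fun i => max (k i * 2 ^ m + 1) (min (t i) (k i * 2 ^ m + 2 ^ m - 2)) with hk'
  have hk'lo : ∀ i, k i * 2 ^ m + 1 ≤ k' i := fun i => le_max_left _ _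
  have hk'hi : ∀ i, k' i ≤ k i * 2 ^ m + 2 ^ m - 2 := fun i =>
    max_le (by omega) (min_le_right _ _)
  have hk't : ∀ i, t i - 2 ≤ k' i ∧ k' i ≤ t i + 2 := by
    intro i
    have h1 := htlo i
    have h2 := hthi i
    rcases max_cases (k i * 2 ^ m + 1) (min (t i) (k i * 2 ^ m + 2 ^ m - 2)) with
      ⟨he, hb⟩ | ⟨he, hb⟩ <;>
      rcases min_cases (t i) (k i * 2 ^ m + 2 ^ m - 2) with ⟨he', hb'⟩ | ⟨he', hb'⟩ <;>
      simp only [hk'] <;> omega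
  -- real versions
  have hk'loR : ∀ i, (k i : ℝ) * E + 1 ≤ (k' i : ℝ) := by
    intro i; rw [hE]; exact_mod_cast hk'lo i
  have hk'hiR : ∀ i, (k' i : ℝ) ≤ (k i : ℝ) * E + E - 2 := by
    intro i; rw [hE]; exact_mod_cast hk'hi i
  have htloR : ∀ i, (t i : ℝ) - 2 ≤ (k' i : ℝ) := by
    intro i; exact_mod_cast (hk't i).1
  have hthiR : ∀ i, (k' i : ℝ) ≤ (t i : ℝ) + 2 := by
    intro i; exact_mod_cast (hk't i).2
  have hsub : dyCube n j' k' ⊆ interior (dyCube n j k) := by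
    intro x hx
    have hxi : ∀ i, (k' i : ℝ) * L ≤ x i ∧ x i ≤ ((k' i : ℝ) + 1) * L := by
      have := mem_dyCube_iff.1 hx
      rwa [← hL] at this
    rw [dyCube, ← hℓdef, ← hc, interior_closedBall c (by positivity : ℓ/2 ≠ 0),
      mem_ball, dist_pi_lt_iff (by positivity)]
    intro i
    have hxlo : (k i : ℝ) * ℓ + L ≤ x i := by
      calc (k i : ℝ) * ℓ + L = ((k i : ℝ) * E + 1) * L := by rw [← hLE]; ring
        _ ≤ (k' i : ℝ) * L := mul_le_mul_of_nonneg_right (hk'loR i) hLpos.le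
        _ ≤ x i := (hxi i).1
    have hxhi : x i ≤ (k i : ℝ) * ℓ + ℓ - L := by
      calc x i ≤ ((k' i : ℝ) + 1) * L := (hxi i).2
        _ ≤ ((k i : ℝ) * E + E - 1) * L := by
            apply mul_le_mul_of_nonneg_right _ hLpos.le
            linarith [hk'hiR i]
        _ = (k i : ℝ) * ℓ + ℓ - L := by rw [← hLE]; ring
    rw [Real.dist_eq, abs_lt]
    have hci : c i = ((k i : ℝ) + 1/2) * ℓ := by rw [hc, dyCenter, ← hℓdef]
    rw [hci]
    constructor <;> linarith [hxlo, hxhi, hLpos, hℓpos]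
  refine ⟨j', k', hsub, ?_, ?_⟩
  · -- side length comparison
    rw [← hL, hLval, ← mul_div_assoc, le_div_iff₀ hEpos]
    nlinarith [mul_le_mul_of_nonneg_left hE2 hℓpos.le,
      mul_nonneg (mul_nonneg hκ0.le hγ.le) hℓpos.le]
  · -- distance bounds
    intro x hx
    have hxi : ∀ i, (k' i : ℝ) * L ≤ x i ∧ x i ≤ ((k' i : ℝ) + 1) * L := by
      have := mem_dyCube_iff.1 hx
      rwa [← hL] at this
    have hxy : dist x y ≤ 3 * L := by
      rw [dist_pi_le_iff (by positivity)]
      intro i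
      rw [Real.dist_eq, abs_le]
      have h1 := mul_le_mul_of_nonneg_right (htloR i) hLpos.le
      have h2 := mul_le_mul_of_nonneg_right (hthiR i) hLpos.le
      have h3 := (hxi i).1
      have h4 := (hxi i).2
      have h5 := (hfloor i).1
      have h6 := (hfloor i).2
      constructor <;> linarith
    have hxc : dist x c ≤ ℓ / 2 := by
      have h' := interior_subset (hsub hx)
      rw [dyCube, mem_closedBall] at h'
      exact h'
    constructor
    · -- lower bound
      have hlow : ℓ / (2*κ) - 3 * L ≤ infDist x S := by
        have h := infDist_le_infDist_add_dist (x := y) (y := x) (s := S)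
        rw [dist_comm] at h
        linarith
      have h3L : 3 * L ≤ 3 * ℓ / (8*κ) := by
        rw [hLval, ← mul_div_assoc, div_le_div_iff₀ hEpos (by positivity)]
        nlinarith
      have h8 : ℓ / (16*κ*(1+γ)) ≤ ℓ / (8*κ) := by
        rw [div_le_div_iff₀ (by positivity) (by positivity)]
        nlinarith [mul_nonneg (mul_nonneg hℓpos.le hκ0.le) hγ.le,
          mul_nonneg hℓpos.le hκ0.le]
      have hdiv : ℓ/(2*κ) - 3*ℓ/(8*κ) = ℓ/(8*κ) := by
        field_simp
        ring
      linarith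
    · -- upper bound
      have hcS : infDist c S ≤ γ * ℓ := by
        have h := mul_le_mul_of_nonneg_left hdist hγ.le
        rw [← mul_assoc, mul_inv_cancel₀ hγ.ne', one_mul] at h
        exact h
      have h := infDist_le_infDist_add_dist (x := x) (y := c) (s := S)
      have hfin : γ * ℓ + ℓ/2 ≤ 16 * κ * (1 + γ) * ℓ := by
        nlinarith [mul_nonneg hγ.le hℓpos.le,
          mul_nonneg (mul_nonneg hγ.le hℓpos.le) (by linarith : (0:ℝ) ≤ κ - 1),
          mul_nonneg hℓpos.le (by linarith : (0:ℝ) ≤ κ - 1)]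
      linarith
end

section
/- Let S ⊂ ℝ^n be κ-porous, γ>0, σ = 16κ(1+γ), and let r_0 ∈ ℕ satisfy σ² < 2^{r_0}. For each Q in the family C_{S,γ} of dyadic cubes with γ^{-1} dist(x_Q,S) ≤ ℓ(Q) ≤ 1, let r(Q) be a dyadic cube as in the porosity selection (r(Q) ⊂ int Q, ℓ(Q) ≤ σℓ(r(Q)), and ℓ(Q)/σ ≤ dist(x,S) ≤ σℓ(Q) on r(Q)). If Q, R ∈ C_{S,γ} are distinct cubes whose side-length exponents are congruent modulo r_0, then r(Q) ∩ r(R) = ∅. -/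
open Metric

lemma stmt6_aux (σ : ℝ) (hσ : 16 ≤ σ) (r₀ : ℕ) (hr₀ : σ ^ 2 < 2 ^ r₀)
    (j₁ j₂ : ℤ) (hlt : j₁ < j₂) (hmod : j₁ % (r₀ : ℤ) = j₂ % (r₀ : ℤ))
    (d : ℝ) (h1 : 2 ^ (-j₁) / σ ≤ d) (h2 : d ≤ σ * 2 ^ (-j₂)) : False := by
  have hσ0 : (0:ℝ) < σ := by linarith
  have hdvd : (r₀ : ℤ) ∣ j₂ - j₁ := (Int.ModEq.dvd (hmod : j₁ ≡ j₂ [ZMOD r₀]))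
  have hle : (r₀ : ℤ) ≤ j₂ - j₁ := Int.le_of_dvd (by omega) hdvd
  have hp : (2:ℝ) ^ (r₀ : ℤ) ≤ 2 ^ (j₂ - j₁) := zpow_le_zpow_right₀ one_le_two hle
  have hnat : (2:ℝ) ^ (r₀ : ℤ) = 2 ^ r₀ := zpow_natCast 2 r₀
  have hsplit : (2:ℝ) ^ (-j₁) = 2 ^ (j₂ - j₁) * 2 ^ (-j₂) := by
    rw [← zpow_add₀ (by norm_num : (2:ℝ) ≠ 0)]; ring_nf
  have hpos2 : (0:ℝ) < 2 ^ (-j₂) := zpow_pos (by norm_num) _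
  have key : (2:ℝ) ^ (-j₁) ≤ σ ^ 2 * 2 ^ (-j₂) := by
    have := div_le_iff₀ hσ0 |>.mp (h1.trans h2)
    nlinarith
  have : σ ^ 2 * 2 ^ (-j₂) < 2 ^ (-j₁) := by
    calc σ ^ 2 * 2 ^ (-j₂) < (2:ℝ) ^ r₀ * 2 ^ (-j₂) := by nlinarith
    _ ≤ 2 ^ (j₂ - j₁) * 2 ^ (-j₂) := by rw [← hnat]; nlinarith
    _ = 2 ^ (-j₁) := hsplit.symm
  linarith

lemma stmt6_same (n : ℕ) (j : ℤ) (k₁ k₂ : Fin n → ℤ) (hk : k₁ ≠ k₂) :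
    interior (dyCube n j k₁) ∩ interior (dyCube n j k₂) = ∅ := by
  obtain ⟨i, hi⟩ := Function.ne_iff.mp hk
  have hrpos : (0:ℝ) < 2 ^ (-j) / 2 := by positivity
  ext x
  simp only [Set.mem_inter_iff, Set.mem_empty_iff_false, iff_false]
  rintro ⟨hx₁, hx₂⟩
  rw [dyCube, interior_closedBall _ (ne_of_gt hrpos)] at hx₁ hx₂
  have d1 : dist x (dyCenter n j k₁) < 2 ^ (-j) / 2 := hx₁
  have d2 : dist x (dyCenter n j k₂) < 2 ^ (-j) / 2 := hx₂
  have e1 : dist (x i) (dyCenter n j k₁ i) ≤ dist x (dyCenter n j k₁) :=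
    dist_le_pi_dist _ _ i
  have e2 : dist (x i) (dyCenter n j k₂ i) ≤ dist x (dyCenter n j k₂) :=
    dist_le_pi_dist _ _ i
  have hc : dist (dyCenter n j k₁ i) (dyCenter n j k₂ i)
      = |(k₁ i : ℝ) - k₂ i| * 2 ^ (-j) := by
    rw [Real.dist_eq, dyCenter, dyCenter]
    rw [show ((k₁ i : ℝ) + 1/2) * 2 ^ (-j) - ((k₂ i : ℝ) + 1/2) * 2 ^ (-j)
        = ((k₁ i : ℝ) - k₂ i) * 2 ^ (-j) by ring]
    rw [abs_mul, abs_of_pos (zpow_pos (by norm_num : (0:ℝ) < 2) _)]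
  have h1le : (1:ℝ) ≤ |(k₁ i : ℝ) - k₂ i| := by
    have : 1 ≤ |k₁ i - k₂ i| := Int.one_le_abs (sub_ne_zero.mpr hi)
    exact_mod_cast this
  have htri := dist_triangle (dyCenter n j k₁ i) (x i) (dyCenter n j k₂ i)
  rw [dist_comm (dyCenter n j k₁ i) (x i)] at htri
  have hj : (0:ℝ) < 2 ^ (-j) := zpow_pos (by norm_num) _
  nlinarith [hc, h1le]

/-- Let `S` be κ-porous, `γ > 0`, `σ = 16κ(1+γ)`, and `r₀ ∈ ℕ` with `σ² < 2^(r₀)`.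
If `Q₁, Q₂` are distinct dyadic cubes in `C_{S,γ}` whose side-length exponents are congruent
mod `r₀`, and `r(Q₁), r(Q₂)` are dyadic cubes satisfying the porosity selection properties,
then `r(Q₁) ∩ r(Q₂) = ∅`. -/
theorem stmt_6 (n : ℕ) (S : Set (Fin n → ℝ)) (hSne : S.Nonempty)
    (κ : ℝ) (hκ : 1 ≤ κ)
    (hpor : ∀ (x : Fin n → ℝ) (r : ℝ), 0 < r → r ≤ 1 →
      ∃ y ∈ closedBall x r, closedBall y (r / κ) ∩ S = ∅)
    (γ : ℝ) (hγ : 0 < γ) (r₀ : ℕ) (hr₀ : (16 * κ * (1 + γ)) ^ 2 < 2 ^ r₀)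
    (j₁ j₂ : ℤ) (k₁ k₂ : Fin n → ℤ)
    (hQ₁ : γ⁻¹ * infDist (dyCenter n j₁ k₁) S ≤ 2 ^ (-j₁) ∧ (2 : ℝ) ^ (-j₁) ≤ 1)
    (hQ₂ : γ⁻¹ * infDist (dyCenter n j₂ k₂) S ≤ 2 ^ (-j₂) ∧ (2 : ℝ) ^ (-j₂) ≤ 1)
    (j₁' j₂' : ℤ) (k₁' k₂' : Fin n → ℤ)
    (hr₁ : dyCube n j₁' k₁' ⊆ interior (dyCube n j₁ k₁) ∧
      (2 : ℝ) ^ (-j₁) ≤ 16 * κ * (1 + γ) * 2 ^ (-j₁') ∧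
      ∀ x ∈ dyCube n j₁' k₁',
        (2 : ℝ) ^ (-j₁) / (16 * κ * (1 + γ)) ≤ infDist x S ∧
        infDist x S ≤ 16 * κ * (1 + γ) * 2 ^ (-j₁))
    (hr₂ : dyCube n j₂' k₂' ⊆ interior (dyCube n j₂ k₂) ∧
      (2 : ℝ) ^ (-j₂) ≤ 16 * κ * (1 + γ) * 2 ^ (-j₂') ∧
      ∀ x ∈ dyCube n j₂' k₂',
        (2 : ℝ) ^ (-j₂) / (16 * κ * (1 + γ)) ≤ infDist x S ∧
        infDist x S ≤ 16 * κ * (1 + γ) * 2 ^ (-j₂))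
    (hne : dyCube n j₁ k₁ ≠ dyCube n j₂ k₂)
    (hmod : j₁ % (r₀ : ℤ) = j₂ % (r₀ : ℤ)) :
    dyCube n j₁' k₁' ∩ dyCube n j₂' k₂' = ∅ := by
  have hσ : (16:ℝ) ≤ 16 * κ * (1 + γ) := by nlinarith
  rcases lt_trichotomy j₁ j₂ with hlt | heq | hgt
  · ext x
    simp only [Set.mem_inter_iff, Set.mem_empty_iff_false, iff_false]
    rintro ⟨hx₁, hx₂⟩
    exact stmt6_aux _ hσ r₀ hr₀ j₁ j₂ hlt hmod (infDist x S)
      (hr₁.2.2 x hx₁).1 (hr₂.2.2 x hx₂).2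
  · subst heq
    have hk : k₁ ≠ k₂ := by rintro rfl; exact hne rfl
    have := stmt6_same n j₁ k₁ k₂ hk
    apply Set.eq_empty_of_subset_empty
    rw [← this]
    exact Set.inter_subset_inter hr₁.1 hr₂.1
  · ext x
    simp only [Set.mem_inter_iff, Set.mem_empty_iff_false, iff_false]
    rintro ⟨hx₁, hx₂⟩
    exact stmt6_aux _ hσ r₀ hr₀ j₂ j₁ hgt hmod.symm (infDist x S)
      (hr₂.2.2 x hx₂).1 (hr₁.2.2 x hx₁).2
end

section
/- Let S be a d-set in ℝ^n, n−1<d<n, k ∈ ℕ, 1 ≤ u ≤ p < ∞, and let f ∈ L^1_loc(ℝ^n). Then for every i ∈ ℕ: ‖E_k(f,Q(·,2^{-i}))_{L^u(ℝ^n)}‖_{L^p(S,H^d)} ≤ c 2^{i(n−d)/p} ‖E_k(f,Q(·,2^{-i+2}))_{L^u(ℝ^n)}‖_{L^p(ℝ^n)}, where c depends on n, u, p, and S. -/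
open Metric MeasureTheory
open scoped ENNReal

/-- Functions `ℝⁿ → ℝ` given by polynomials of degree at most `k - 1`
(for `k = 0` this is the zero space `P_{-1} = {0}`). -/
def degLT (n k : ℕ) : Set ((Fin n → ℝ) → ℝ) :=
  {P | ∃ q : MvPolynomial (Fin n) ℝ, (q = 0 ∨ q.totalDegree + 1 ≤ k) ∧
    ∀ x, P x = MvPolynomial.eval x q}

/-- The normalized local best approximation in `ℝⁿ`:
`E_k(f,Q(x,r))_{L^u(ℝⁿ)} = inf_{deg P ≤ k-1} (|Q|⁻¹ ∫_Q |f - P|^u dx)^{1/u}`, expressed as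
the `L^u`-norm with respect to the normalized Lebesgue measure on the cube. -/
noncomputable def locApproxRn (n k : ℕ) (u : ℝ) (f : (Fin n → ℝ) → ℝ)
    (x : Fin n → ℝ) (r : ℝ) : ℝ≥0∞ :=
  ⨅ P ∈ degLT n k, eLpNorm (fun y => f y - P y) (ENNReal.ofReal u)
    ((volume (closedBall x r))⁻¹ • volume.restrict (closedBall x r))

namespace Stmt16

/-- The normalized measure on a ball. -/
noncomputable def nmeas {n : ℕ} (x : Fin n → ℝ) (r : ℝ) : Measure (Fin n → ℝ) :=
  (volume (closedBall x r))⁻¹ • volume.restrict (closedBall x r)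

/-- The set of polynomials of degree `< k`. -/
def QS (n k : ℕ) : Set (MvPolynomial (Fin n) ℝ) := {q | q = 0 ∨ q.totalDegree + 1 ≤ k}

/-- `eLpNorm` of `f - eval q` w.r.t. the normalized measure. -/
noncomputable def Fq {n : ℕ} (u : ℝ) (f : (Fin n → ℝ) → ℝ) (x : Fin n → ℝ) (R : ℝ)
    (q : MvPolynomial (Fin n) ℝ) : ℝ≥0∞ :=
  eLpNorm (fun z => f z - MvPolynomial.eval z q) (ENNReal.ofReal u) (nmeas x R)

variable {n k : ℕ} {u : ℝ}

lemma nmeas_ac (x : Fin n → ℝ) (r : ℝ) : nmeas x r ≪ volume := by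
  refine Measure.AbsolutelyContinuous.mk fun s hs h0 => ?_
  have h1 : volume (s ∩ closedBall x r) = 0 :=
    measure_mono_null Set.inter_subset_left h0
  simp [nmeas, Measure.restrict_apply hs, h1]

lemma locApprox_congr_ae {f f' : (Fin n → ℝ) → ℝ}
    (h : f =ᵐ[volume] f') (x : Fin n → ℝ) (r : ℝ) :
    locApproxRn n k u f x r = locApproxRn n k u f' x r := by
  unfold locApproxRn
  refine iInf_congr fun P => iInf_congr fun _ => eLpNorm_congr_ae ?_
  have h2 : f =ᵐ[nmeas x r] f' := h.filter_mono (nmeas_ac x r).ae_le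
  exact h2.sub (Filter.EventuallyEq.refl _ _)

lemma locApprox_eq (n k : ℕ) (u : ℝ) (f : (Fin n → ℝ) → ℝ) (x : Fin n → ℝ) (r : ℝ) :
    locApproxRn n k u f x r = ⨅ q ∈ QS n k, Fq u f x r q := by
  apply le_antisymm
  · refine le_iInf₂ fun q hq => ?_
    exact iInf₂_le (fun z => MvPolynomial.eval z q) ⟨q, hq, fun _ => rfl⟩
  · refine le_iInf₂ fun P hP => ?_
    obtain ⟨q, hq, hPq⟩ := hP
    have he : (fun y => f y - P y) = fun y => f y - MvPolynomial.eval y q :=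
      funext fun y => by rw [hPq]
    rw [show (eLpNorm (fun y => f y - P y) (ENNReal.ofReal u)
      ((volume (closedBall x r))⁻¹ • volume.restrict (closedBall x r)))
      = Fq u f x r q by rw [Fq, nmeas, ← he]]
    exact iInf₂_le q hq

lemma vol_cb {x : Fin n → ℝ} {r : ℝ} (hr : 0 ≤ r) :
    volume (closedBall x r) = ENNReal.ofReal ((2 * r) ^ n) := by
  rw [Real.volume_pi_closedBall x hr, Fintype.card_fin]

lemma nmeas_univ {x : Fin n → ℝ} {r : ℝ} (hr : 0 < r) : nmeas x r Set.univ = 1 := by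
  have hV : volume (closedBall x r) = ENNReal.ofReal ((2 * r) ^ n) := vol_cb hr.le
  have h0 : volume (closedBall x r) ≠ 0 := by
    rw [hV]; simp only [ne_eq, ENNReal.ofReal_eq_zero, not_le]; positivity
  have hT : volume (closedBall x r) ≠ ∞ := by rw [hV]; exact ENNReal.ofReal_ne_top
  simp only [nmeas, Measure.smul_apply, smul_eq_mul, Measure.restrict_apply_univ]
  exact ENNReal.inv_mul_cancel h0 hT

lemma poly_approx (y : Fin n → ℝ) (R : ℝ) (q : MvPolynomial (Fin n) ℝ)
    (hq : q = 0 ∨ q.totalDegree + 1 ≤ k) {δ : ℝ} (hδ : 0 < δ) :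
    ∃ q' : MvPolynomial (Fin n) ℚ, (q' = 0 ∨ q'.totalDegree + 1 ≤ k) ∧
      ∀ z ∈ closedBall y R, |MvPolynomial.eval z q -
        MvPolynomial.eval z (MvPolynomial.map (algebraMap ℚ ℝ) q')| ≤ δ := by
  classical
  set C : ℝ := ‖y‖ + |R| + 1 with hCdef
  have hC1 : 1 ≤ C := by have := norm_nonneg y; have := abs_nonneg R; rw [hCdef]; linarith
  have hC0 : 0 ≤ C := le_trans zero_le_one hC1
  have hz : ∀ z ∈ closedBall y R, ∀ i, |z i| ≤ C := by
    intro z hzz i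
    have h1 : |z i - y i| ≤ dist z y := by
      rw [← Real.dist_eq]; exact dist_le_pi_dist z y i
    have h2 : dist z y ≤ R := mem_closedBall.1 hzz
    have h3 : |y i| ≤ ‖y‖ := norm_le_pi_norm y i
    calc |z i| = |y i + (z i - y i)| := by ring_nf
      _ ≤ |y i| + |z i - y i| := abs_add_le _ _
      _ ≤ ‖y‖ + |R| := add_le_add h3 (h1.trans (h2.trans (le_abs_self R)))
      _ ≤ C := by rw [hCdef]; linarith
  have hdeg : ∀ m ∈ q.support, (m.sum fun _ e => e) ≤ k := by
    intro m hm
    rcases hq with h0 | hk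
    · simp [h0] at hm
    · exact le_trans (MvPolynomial.le_totalDegree hm) (by omega)
  have hmb : ∀ m ∈ q.support, ∀ z ∈ closedBall y R,
      |m.prod fun i e => z i ^ e| ≤ C ^ k := by
    intro m hm z hzz
    have h1 : |m.prod fun i e => z i ^ e| = ∏ i ∈ m.support, |z i| ^ m i := by
      rw [Finsupp.prod, Finset.abs_prod]
      exact Finset.prod_congr rfl fun i _ => abs_pow _ _
    rw [h1]
    calc ∏ i ∈ m.support, |z i| ^ m i ≤ ∏ i ∈ m.support, C ^ m i :=
          Finset.prod_le_prod (fun i _ => by positivity)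
            (fun i _ => pow_le_pow_left₀ (abs_nonneg _) (hz z hzz i) _)
      _ = C ^ (m.sum fun _ e => e) := by rw [Finsupp.sum, Finset.prod_pow_eq_pow_sum]
      _ ≤ C ^ k := pow_le_pow_right₀ hC1 (hdeg m hm)
  set N : ℝ := (q.support.card : ℝ)
  have hN0 : 0 ≤ N := Nat.cast_nonneg _
  set δ' : ℝ := δ / (N * C ^ k + 1) with hδ'def
  have hden : 0 < N * C ^ k + 1 := by positivity
  have hδ' : 0 < δ' := div_pos hδ hden
  have hrat : ∀ m : Fin n →₀ ℕ, ∃ a : ℚ, |MvPolynomial.coeff m q - (a : ℝ)| < δ' :=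
    fun m => exists_rat_near _ hδ'
  choose r hr using hrat
  refine ⟨∑ m ∈ q.support, MvPolynomial.monomial m (r m), ?_, ?_⟩
  · rcases hq with h0 | hk
    · left; simp [h0]
    · right
      have : (∑ m ∈ q.support, MvPolynomial.monomial m (r m)).totalDegree ≤ q.totalDegree := by
        refine le_trans (MvPolynomial.totalDegree_finset_sum _ _) (Finset.sup_le fun m hm => ?_)
        by_cases h : r m = 0
        · simp [h]
        · rw [MvPolynomial.totalDegree_monomial _ h]
          exact MvPolynomial.le_totalDegree hm
      omega
  · intro z hzz
    have hmap : MvPolynomial.map (algebraMap ℚ ℝ) (∑ m ∈ q.support, MvPolynomial.monomial m (r m))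
        = ∑ m ∈ q.support, MvPolynomial.monomial m ((r m : ℝ)) := by
      rw [map_sum]
      exact Finset.sum_congr rfl fun m _ => by
        rw [MvPolynomial.map_monomial, eq_ratCast]
    have heval : MvPolynomial.eval z q -
        MvPolynomial.eval z (MvPolynomial.map (algebraMap ℚ ℝ)
          (∑ m ∈ q.support, MvPolynomial.monomial m (r m)))
        = ∑ m ∈ q.support, (MvPolynomial.coeff m q - (r m : ℝ)) *
            (m.prod fun i e => z i ^ e) := by
      rw [hmap, map_sum, MvPolynomial.eval_eq]
      rw [← Finset.sum_sub_distrib]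
      refine Finset.sum_congr rfl fun m hm => ?_
      rw [MvPolynomial.eval_monomial, sub_mul]
      rfl
    rw [heval]
    calc |∑ m ∈ q.support, (MvPolynomial.coeff m q - (r m : ℝ)) * (m.prod fun i e => z i ^ e)|
        ≤ ∑ m ∈ q.support, |(MvPolynomial.coeff m q - (r m : ℝ)) *
            (m.prod fun i e => z i ^ e)| := Finset.abs_sum_le_sum_abs _ _
      _ ≤ ∑ m ∈ q.support, δ' * C ^ k := by
          refine Finset.sum_le_sum fun m hm => ?_
          rw [abs_mul]
          exact mul_le_mul (hr m).le (hmb m hm z hzz) (abs_nonneg _) hδ'.le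
      _ = N * C ^ k * δ' := by rw [Finset.sum_const, nsmul_eq_mul]; ring
      _ ≤ (N * C ^ k + 1) * δ' := by nlinarith
      _ = δ := by rw [hδ'def, mul_div_cancel₀ _ hden.ne']

lemma Fq_triangle (hu : 1 ≤ u) {f : (Fin n → ℝ) → ℝ} (hf : Measurable f)
    {y : Fin n → ℝ} {R : ℝ} (hR : 0 < R) (q q' : MvPolynomial (Fin n) ℝ) {δ : ℝ}
    (hδ : ∀ z ∈ closedBall y R, |MvPolynomial.eval z q - MvPolynomial.eval z q'| ≤ δ) :
    Fq u f y R q' ≤ Fq u f y R q + ENNReal.ofReal δ := by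
  have he1 : (1 : ℝ≥0∞) ≤ ENNReal.ofReal u := by
    rw [show (1:ℝ≥0∞) = ENNReal.ofReal 1 by simp]
    exact ENNReal.ofReal_le_ofReal hu
  have hcont : ∀ p : MvPolynomial (Fin n) ℝ,
      Continuous fun z : Fin n → ℝ => MvPolynomial.eval z p :=
    fun p => MvPolynomial.continuous_eval p
  have heq : (fun z => f z - MvPolynomial.eval z q') =
      (fun z => f z - MvPolynomial.eval z q) +
      (fun z => MvPolynomial.eval z q - MvPolynomial.eval z q') := by
    funext z; simp only [Pi.add_apply]; ring
  have h1 : AEStronglyMeasurable (fun z => f z - MvPolynomial.eval z q) (nmeas y R) :=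
    (hf.sub (hcont q).measurable).aestronglyMeasurable
  have h2 : AEStronglyMeasurable
      (fun z => MvPolynomial.eval z q - MvPolynomial.eval z q') (nmeas y R) :=
    ((hcont q).sub (hcont q')).aestronglyMeasurable
  calc Fq u f y R q' = eLpNorm ((fun z => f z - MvPolynomial.eval z q) +
        (fun z => MvPolynomial.eval z q - MvPolynomial.eval z q'))
        (ENNReal.ofReal u) (nmeas y R) := by rw [Fq, heq]
    _ ≤ Fq u f y R q + eLpNorm (fun z => MvPolynomial.eval z q - MvPolynomial.eval z q')
          (ENNReal.ofReal u) (nmeas y R) := eLpNorm_add_le h1 h2 he1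
    _ ≤ Fq u f y R q + ENNReal.ofReal δ := by
        refine add_le_add_right ?_ _
        have hb : ∀ᵐ z ∂(nmeas y R), ‖MvPolynomial.eval z q - MvPolynomial.eval z q'‖ ≤ δ := by
          refine Measure.ae_smul_measure ?_ _
          refine ae_restrict_of_forall_mem measurableSet_closedBall fun z hz => ?_
          rw [Real.norm_eq_abs]; exact hδ z hz
        have hb2 := eLpNorm_le_of_ae_bound (p := ENNReal.ofReal u) hb
        rw [nmeas_univ hR, ENNReal.one_rpow, one_mul] at hb2
        exact hb2

lemma measurable_Fq {f : (Fin n → ℝ) → ℝ} (hf : Measurable f) (hu : 1 ≤ u)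
    {R : ℝ} (hR : 0 < R) (q : MvPolynomial (Fin n) ℝ) :
    Measurable fun y => Fq u f y R q := by
  have hu0 : (0:ℝ) < u := lt_of_lt_of_le one_pos hu
  have he0 : ENNReal.ofReal u ≠ 0 := by
    simp only [ne_eq, ENNReal.ofReal_eq_zero, not_le]; exact hu0
  have heT : ENNReal.ofReal u ≠ ∞ := ENNReal.ofReal_ne_top
  have het : (ENNReal.ofReal u).toReal = u := ENNReal.toReal_ofReal hu0.le
  have hw : Measurable fun z : Fin n → ℝ =>
      (‖f z - MvPolynomial.eval z q‖₊ : ℝ≥0∞) ^ u :=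
    ((hf.sub (MvPolynomial.continuous_eval q).measurable).nnnorm.coe_nnreal_ennreal).pow
      measurable_const
  have key : ∀ y, Fq u f y R q = ((volume (closedBall (0 : Fin n → ℝ) R))⁻¹ *
      ∫⁻ z, ({p : (Fin n → ℝ) × (Fin n → ℝ) | dist p.2 p.1 ≤ R}.indicator
        (fun p => (‖f p.2 - MvPolynomial.eval p.2 q‖₊ : ℝ≥0∞) ^ u)) (y, z) ∂volume) ^ (1 / u) := by
    intro y
    rw [Fq, eLpNorm_eq_lintegral_rpow_enorm_toReal he0 heT]; simp only [enorm_eq_nnnorm]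
    rw [het, nmeas, lintegral_smul_measure]
    have hVol : volume (closedBall y R) = volume (closedBall (0 : Fin n → ℝ) R) := by
      rw [Real.volume_pi_closedBall _ hR.le, Real.volume_pi_closedBall _ hR.le]
    rw [hVol]
    have hii : ∫⁻ z in closedBall y R, (‖f z - MvPolynomial.eval z q‖₊ : ℝ≥0∞) ^ u ∂volume
        = ∫⁻ z, ({p : (Fin n → ℝ) × (Fin n → ℝ) | dist p.2 p.1 ≤ R}.indicator
          (fun p => (‖f p.2 - MvPolynomial.eval p.2 q‖₊ : ℝ≥0∞) ^ u)) (y, z) ∂volume := by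
      rw [← lintegral_indicator measurableSet_closedBall]
      refine lintegral_congr fun z => ?_
      by_cases h : dist z y ≤ R <;>
        simp [Set.indicator_apply, mem_closedBall, Set.mem_setOf_eq, h]
    rw [hii, smul_eq_mul]
  simp only [key]
  have hset : MeasurableSet {p : (Fin n → ℝ) × (Fin n → ℝ) | dist p.2 p.1 ≤ R} :=
    (isClosed_le (continuous_snd.dist continuous_fst) continuous_const).measurableSet
  have hind : Measurable ({p : (Fin n → ℝ) × (Fin n → ℝ) | dist p.2 p.1 ≤ R}.indicator
      (fun p => (‖f p.2 - MvPolynomial.eval p.2 q‖₊ : ℝ≥0∞) ^ u)) :=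
    (hw.comp measurable_snd).indicator hset
  exact (measurable_const.mul hind.lintegral_prod_right').pow measurable_const

lemma measurable_locApprox {f : (Fin n → ℝ) → ℝ} (hf : Measurable f) (hu : 1 ≤ u)
    {R : ℝ} (hR : 0 < R) :
    Measurable fun y : Fin n → ℝ => ⨅ q ∈ QS n k, Fq u f y R q := by
  classical
  haveI hcnt : Countable (MvPolynomial (Fin n) ℚ) := by
    unfold MvPolynomial; exact (AddMonoidAlgebra.coeffEquiv (R := ℚ) (M := Fin n →₀ ℕ)).injective.countable
  set Φ : MvPolynomial (Fin n) ℚ → MvPolynomial (Fin n) ℝ :=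
    fun q => MvPolynomial.map (algebraMap ℚ ℝ) q with hΦ
  set Dq : Set (MvPolynomial (Fin n) ℚ) := {q | q = 0 ∨ q.totalDegree + 1 ≤ k} with hDq
  have hΦmem : ∀ q' ∈ Dq, Φ q' ∈ QS n k := by
    rintro q' (h0 | hk)
    · left; rw [h0]; simp only [hΦ, map_zero]
    · right
      refine le_trans (Nat.add_le_add_right ?_ 1) hk
      exact Finset.sup_mono (MvPolynomial.support_map_subset _ _)
  have key : ∀ y, ⨅ q ∈ QS n k, Fq u f y R q = ⨅ q' : Dq, Fq u f y R (Φ q') := by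
    intro y
    apply le_antisymm
    · exact le_iInf fun q' => iInf₂_le (Φ q') (hΦmem q' q'.2)
    · refine ENNReal.le_of_forall_pos_le_add fun ε hε hlt => ?_
      have hhalf : (0:ℝ) < (ε : ℝ) / 2 := by positivity
      have hlt2 : ⨅ q ∈ QS n k, Fq u f y R q
          < (⨅ q ∈ QS n k, Fq u f y R q) + ((ε : ℝ≥0∞) / 2) :=
        ENNReal.lt_add_right hlt.ne (by simpa using (ENNReal.coe_ne_zero.2 hε.ne'))
      rw [iInf_lt_iff] at hlt2
      obtain ⟨q0, hlt3⟩ := hlt2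
      rw [iInf_lt_iff] at hlt3
      obtain ⟨hq0, hlt4⟩ := hlt3
      obtain ⟨q', hq', happ⟩ := poly_approx y R q0 hq0 hhalf
      have h5 : Fq u f y R (Φ q') ≤ Fq u f y R q0 + ENNReal.ofReal ((ε : ℝ) / 2) :=
        Fq_triangle hu hf hR q0 (Φ q') happ
      have h6 : ENNReal.ofReal ((ε : ℝ) / 2) ≤ (ε : ℝ≥0∞) / 2 := by
        rw [ENNReal.ofReal_div_of_pos (by norm_num : (0:ℝ) < 2)]
        simp [ENNReal.ofReal_coe_nnreal, ENNReal.ofReal_ofNat]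
      refine le_trans (le_trans (iInf_le _ (⟨q', hq'⟩ : Dq))
        (h5.trans (add_le_add_right h6 _))) ?_
      calc Fq u f y R q0 + (ε : ℝ≥0∞) / 2
          ≤ ((⨅ q ∈ QS n k, Fq u f y R q) + (ε : ℝ≥0∞) / 2) + (ε : ℝ≥0∞) / 2 :=
            add_le_add_left hlt4.le _
        _ = (⨅ q ∈ QS n k, Fq u f y R q) + ε := by
            rw [add_assoc, ENNReal.add_halves]
  simp only [key]
  haveI : Countable Dq := Set.to_countable Dq
  exact Measurable.iInf fun q' => measurable_Fq hf hu hR (Φ q')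

lemma compare (hu : 1 ≤ u) (f : (Fin n → ℝ) → ℝ) {r : ℝ} (hr : 0 < r)
    {x y : Fin n → ℝ} (hxy : dist x y ≤ r / 2) :
    (⨅ q ∈ QS n k, Fq u f x r q) ≤
      ENNReal.ofReal ((4:ℝ) ^ n) ^ (1 / u) * ⨅ q ∈ QS n k, Fq u f y (4 * r) q := by
  have hu0 : (0:ℝ) < u := lt_of_lt_of_le one_pos hu
  have he0 : ENNReal.ofReal u ≠ 0 := by
    simp only [ne_eq, ENNReal.ofReal_eq_zero, not_le]; exact hu0
  have heT : ENNReal.ofReal u ≠ ∞ := ENNReal.ofReal_ne_top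
  have het : (ENNReal.ofReal u).toReal = u := ENNReal.toReal_ofReal hu0.le
  set c4 : ℝ≥0∞ := ENNReal.ofReal ((4:ℝ) ^ n) with hc4
  have hc40 : c4 ≠ 0 := by
    simp only [hc4, ne_eq, ENNReal.ofReal_eq_zero, not_le]; positivity
  have hc4T : c4 ≠ ∞ := ENNReal.ofReal_ne_top
  set K : ℝ≥0∞ := c4 ^ (1 / u) with hK
  have hK0 : K ≠ 0 := by
    simp only [hK, ne_eq, ENNReal.rpow_eq_zero_iff, not_or]
    constructor
    · rintro ⟨h, -⟩; exact hc40 h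
    · rintro ⟨h, -⟩; exact hc4T h
  have hKT : K ≠ ∞ := by
    rw [hK]; exact ENNReal.rpow_ne_top_of_nonneg (by positivity) hc4T
  have hV1 : volume (closedBall x r) = ENNReal.ofReal ((2 * r) ^ n) := vol_cb hr.le
  have hV10 : volume (closedBall x r) ≠ 0 := by
    rw [hV1]; simp only [ne_eq, ENNReal.ofReal_eq_zero, not_le]; positivity
  have hV1T : volume (closedBall x r) ≠ ∞ := by rw [hV1]; exact ENNReal.ofReal_ne_top
  have hV2 : volume (closedBall y (4 * r)) = volume (closedBall x r) * c4 := by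
    rw [vol_cb (by positivity), hV1, hc4, ← ENNReal.ofReal_mul (by positivity)]
    congr 1
    rw [show (2 * (4 * r)) = (2 * r) * 4 by ring, mul_pow]
  have hsub : closedBall x r ⊆ closedBall y (4 * r) := by
    intro z hz
    rw [mem_closedBall] at hz ⊢
    calc dist z y ≤ dist z x + dist x y := dist_triangle _ _ _
      _ ≤ r + r / 2 := add_le_add hz hxy
      _ ≤ 4 * r := by linarith
  have key : ∀ q : MvPolynomial (Fin n) ℝ, Fq u f x r q ≤ K * Fq u f y (4 * r) q := by
    intro q
    rw [Fq, Fq, eLpNorm_eq_lintegral_rpow_enorm_toReal he0 heT,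
      eLpNorm_eq_lintegral_rpow_enorm_toReal he0 heT]; simp only [enorm_eq_nnnorm]
    rw [het, nmeas, nmeas,
      lintegral_smul_measure, lintegral_smul_measure]
    set w : (Fin n → ℝ) → ℝ≥0∞ := fun z => (‖f z - MvPolynomial.eval z q‖₊ : ℝ≥0∞) ^ u with hw
    have hmono : ∫⁻ z in closedBall x r, w z ∂volume ≤
        ∫⁻ z in closedBall y (4 * r), w z ∂volume :=
      lintegral_mono' (Measure.restrict_mono hsub le_rfl) le_rfl
    have hinv : (volume (closedBall x r))⁻¹ =
        c4 * (volume (closedBall y (4 * r)))⁻¹ := by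
      rw [hV2, ENNReal.mul_inv (Or.inl hV10) (Or.inl hV1T), ← mul_assoc,
        mul_comm c4, mul_assoc, ENNReal.mul_inv_cancel hc40 hc4T, mul_one]
    calc ((volume (closedBall x r))⁻¹ * ∫⁻ z in closedBall x r, w z ∂volume) ^ (1 / u)
        ≤ ((volume (closedBall x r))⁻¹ *
            ∫⁻ z in closedBall y (4 * r), w z ∂volume) ^ (1 / u) := by
          exact ENNReal.rpow_le_rpow (mul_le_mul_right hmono _) (by positivity)
      _ = (c4 * ((volume (closedBall y (4 * r)))⁻¹ *
            ∫⁻ z in closedBall y (4 * r), w z ∂volume)) ^ (1 / u) := by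
          rw [hinv, mul_assoc]
      _ = K * ((volume (closedBall y (4 * r)))⁻¹ *
            ∫⁻ z in closedBall y (4 * r), w z ∂volume) ^ (1 / u) := by
          rw [ENNReal.mul_rpow_of_nonneg _ _ (by positivity : (0:ℝ) ≤ 1 / u), hK]
  rw [mul_comm K _, ← ENNReal.div_le_iff_le_mul (Or.inl hK0) (Or.inl hKT)]
  refine le_iInf₂ fun q hq => ?_
  rw [ENNReal.div_le_iff_le_mul (Or.inl hK0) (Or.inl hKT), mul_comm _ K]
  exact le_trans (iInf₂_le q hq) (key q)

end Stmt16

open Stmt16 in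
/-- For a `d`-set `S ⊆ ℝⁿ` with `n-1 < d < n`, `k ∈ ℕ`, `1 ≤ u ≤ p < ∞` and
`f ∈ L¹_loc(ℝⁿ)`, for every `i ∈ ℕ`:
`‖E_k(f,Q(·,2^{-i}))_{L^u(ℝⁿ)}‖_{L^p(S,H^d)} ≤ c 2^{i(n-d)/p} ‖E_k(f,Q(·,2^{-i+2}))_{L^u(ℝⁿ)}‖_{L^p(ℝⁿ)}`. -/
theorem stmt_16 (n : ℕ) (d : ℝ) (hd1 : (n : ℝ) - 1 < d) (hdn : d < n)
    (S : Set (Fin n → ℝ)) (hScl : IsClosed S)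
    (c₁ c₂ : ℝ≥0∞) (hc₁ : 0 < c₁) (hc₂ : c₂ ≠ ∞)
    (hreg : ∀ w ∈ S, ∀ ρ : ℝ, 0 < ρ → ρ ≤ 1 →
      c₁ * ENNReal.ofReal ρ ^ d ≤ μH[d] (closedBall w ρ ∩ S) ∧
        μH[d] (closedBall w ρ ∩ S) ≤ c₂ * ENNReal.ofReal ρ ^ d)
    (k : ℕ) (u p : ℝ) (hu : 1 ≤ u) (hup : u ≤ p) :
    ∃ c : ℝ≥0∞, c ≠ ∞ ∧ ∀ f : (Fin n → ℝ) → ℝ, LocallyIntegrable f volume →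
      ∀ i : ℕ,
        (∫⁻ x in S, (locApproxRn n k u f x ((2 : ℝ) ^ (-(i : ℤ)))) ^ p ∂μH[d]) ^ (1 / p)
          ≤ c * ENNReal.ofReal ((2 : ℝ) ^ ((i : ℝ) * ((n : ℝ) - d) / p)) *
            (∫⁻ x, (locApproxRn n k u f x ((2 : ℝ) ^ (-(i : ℤ) + 2))) ^ p ∂volume) ^ (1 / p) := by
  classical
  have hp1 : 1 ≤ p := le_trans hu hup
  have hp0 : (0:ℝ) < p := lt_of_lt_of_le one_pos hp1
  have hu0 : (0:ℝ) < u := lt_of_lt_of_le one_pos hu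
  set K : ℝ≥0∞ := ENNReal.ofReal ((4:ℝ) ^ n) ^ (1 / u) with hKdef
  have hKT : K ≠ ∞ :=
    ENNReal.rpow_ne_top_of_nonneg (by positivity) ENNReal.ofReal_ne_top
  refine ⟨K * c₂ ^ (1 / p), ?_, ?_⟩
  · exact ENNReal.mul_ne_top hKT (ENNReal.rpow_ne_top_of_nonneg (by positivity) hc₂)
  intro f hf i
  -- measurable representative
  set f' : (Fin n → ℝ) → ℝ := (hf.aestronglyMeasurable).mk f with hf'def
  have hf'm : Measurable f' := (hf.aestronglyMeasurable).stronglyMeasurable_mk.measurable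
  have hae : f =ᵐ[volume] f' := (hf.aestronglyMeasurable).ae_eq_mk
  -- radii
  set r : ℝ := (2:ℝ) ^ (-(i : ℤ)) with hrdef
  have hr : 0 < r := by rw [hrdef]; positivity
  have hrle1 : r ≤ 1 := by
    rw [hrdef]
    calc (2:ℝ) ^ (-(i:ℤ)) ≤ (2:ℝ) ^ (0:ℤ) :=
      zpow_le_zpow_right₀ one_le_two (by omega)
    _ = 1 := by norm_num
  have h4r : (2:ℝ) ^ (-(i : ℤ) + 2) = 4 * r := by
    rw [zpow_add₀ (by norm_num : (2:ℝ) ≠ 0), hrdef]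
    norm_num
    ring
  -- sigma-finiteness of the restricted Hausdorff measure
  haveI : SigmaFinite (μH[d].restrict S) := by
    obtain ⟨T, hTc, hTd⟩ := TopologicalSpace.exists_countable_dense (Fin n → ℝ)
    refine Measure.sigmaFinite_of_countable (hTc.image fun z => closedBall z (1/2)) ?_ ?_
    · rintro s ⟨z, hz, rfl⟩
      rw [Measure.restrict_apply measurableSet_closedBall]
      rcases Set.eq_empty_or_nonempty (closedBall z (1/2) ∩ S) with he | ⟨w, hw1, hw2⟩
      · rw [he]; simp
      · refine lt_of_le_of_lt (measure_mono
          (show closedBall z (1/2) ∩ S ⊆ closedBall w 1 ∩ S from fun v hv => ?_)) ?_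
        · refine ⟨mem_closedBall.2 ?_, hv.2⟩
          have h1 : dist v z ≤ 1/2 := mem_closedBall.1 hv.1
          have h2 : dist z w ≤ 1/2 := by
            rw [dist_comm]; exact mem_closedBall.1 hw1
          calc dist v w ≤ dist v z + dist z w := dist_triangle _ _ _
            _ ≤ 1 := by linarith
        · have hb := (hreg w hw2 1 one_pos le_rfl).2
          refine lt_of_le_of_lt hb ?_
          rw [ENNReal.ofReal_one, ENNReal.one_rpow, mul_one]
          exact lt_top_iff_ne_top.2 hc₂
    · apply Set.eq_univ_of_forall
      intro x
      obtain ⟨z, hz, hdz⟩ := Metric.mem_closure_iff.1 (hTd x) (1/2) (by norm_num)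
      exact Set.mem_sUnion.2 ⟨closedBall z (1/2), Set.mem_image_of_mem _ hz,
        mem_closedBall.2 hdz.le⟩
  -- constants
  set Kp : ℝ≥0∞ := K ^ p with hKp
  have hKpT : Kp ≠ ∞ := ENNReal.rpow_ne_top_of_nonneg hp0.le hKT
  set V : ℝ≥0∞ := ENNReal.ofReal (r ^ n) with hVdef
  have hV0 : V ≠ 0 := by
    simp only [hVdef, ne_eq, ENNReal.ofReal_eq_zero, not_le]; positivity
  have hVT : V ≠ ∞ := ENNReal.ofReal_ne_top
  set M : ℝ≥0∞ := c₂ * ENNReal.ofReal r ^ d with hMdef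
  have hMT : M ≠ ∞ := by
    rw [hMdef]
    refine ENNReal.mul_ne_top hc₂ fun h => ?_
    rw [ENNReal.rpow_eq_top_iff] at h
    rcases h with ⟨h0, -⟩ | ⟨hT, -⟩
    · rw [ENNReal.ofReal_eq_zero] at h0; linarith
    · exact ENNReal.ofReal_ne_top hT
  -- the function to integrate on the right
  set g : (Fin n → ℝ) → ℝ≥0∞ := fun y => (⨅ q ∈ QS n k, Fq u f' y (4 * r) q) ^ p with hgdef
  have hg : Measurable g :=
    (measurable_locApprox (k := k) hf'm hu (by positivity)).pow measurable_const
  have hVb : ∀ x : Fin n → ℝ, volume (closedBall x (r/2)) = V := by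
    intro x
    rw [vol_cb (by positivity), hVdef, show (2 * (r/2)) = r by ring]
  -- Step 1: pointwise averaging bound
  have step1 : ∀ x : Fin n → ℝ, (⨅ q ∈ QS n k, Fq u f' x r q) ^ p ≤
      (V⁻¹ * Kp) * ∫⁻ y in closedBall x (r/2), g y ∂volume := by
    intro x
    have hpt : ∀ y ∈ closedBall x (r/2),
        (⨅ q ∈ QS n k, Fq u f' x r q) ^ p ≤ Kp * g y := by
      intro y hy
      have hd : dist x y ≤ r / 2 := by rw [dist_comm]; exact mem_closedBall.1 hy
      have hcmp := compare (k := k) hu f' hr hd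
      calc (⨅ q ∈ QS n k, Fq u f' x r q) ^ p
          ≤ (K * ⨅ q ∈ QS n k, Fq u f' y (4 * r) q) ^ p :=
            ENNReal.rpow_le_rpow hcmp hp0.le
        _ = Kp * g y := by
            rw [ENNReal.mul_rpow_of_nonneg _ _ hp0.le, hKp, hgdef]
    calc (⨅ q ∈ QS n k, Fq u f' x r q) ^ p
        = V⁻¹ * ((⨅ q ∈ QS n k, Fq u f' x r q) ^ p * V) := by
          rw [← mul_assoc, mul_comm V⁻¹, mul_assoc,
            ENNReal.inv_mul_cancel hV0 hVT, mul_one]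
      _ = V⁻¹ * ∫⁻ _ in closedBall x (r/2), (⨅ q ∈ QS n k, Fq u f' x r q) ^ p ∂volume := by
          rw [setLIntegral_const, hVb x]
      _ ≤ V⁻¹ * ∫⁻ y in closedBall x (r/2), Kp * g y ∂volume :=
          mul_le_mul_right (setLIntegral_mono (hg.const_mul Kp) hpt) _
      _ = V⁻¹ * (Kp * ∫⁻ y in closedBall x (r/2), g y ∂volume) := by
          rw [lintegral_const_mul Kp hg]
      _ = (V⁻¹ * Kp) * ∫⁻ y in closedBall x (r/2), g y ∂volume := by rw [mul_assoc]
  -- Step 2: integrate over S and swap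
  set G : (Fin n → ℝ) × (Fin n → ℝ) → ℝ≥0∞ :=
    ({p : (Fin n → ℝ) × (Fin n → ℝ) | dist p.2 p.1 ≤ r/2}).indicator (fun p => g p.2) with hGdef
  have hGmeas : Measurable G :=
    (hg.comp measurable_snd).indicator
      ((isClosed_le (continuous_snd.dist continuous_fst) continuous_const).measurableSet)
  have hGinner : ∀ x : Fin n → ℝ,
      ∫⁻ y in closedBall x (r/2), g y ∂volume = ∫⁻ y, G (x, y) ∂volume := by
    intro x
    rw [← lintegral_indicator measurableSet_closedBall]
    refine lintegral_congr fun y => ?_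
    by_cases h : dist y x ≤ r/2 <;>
      simp [hGdef, Set.indicator_apply, mem_closedBall, Set.mem_setOf_eq, h]
  have hswap : ∫⁻ x in S, ∫⁻ y, G (x, y) ∂volume ∂μH[d]
      = ∫⁻ y, ∫⁻ x in S, G (x, y) ∂μH[d] ∂volume :=
    lintegral_lintegral_swap hGmeas.aemeasurable
  have hinner : ∀ y : Fin n → ℝ,
      ∫⁻ x in S, G (x, y) ∂μH[d] = g y * μH[d] (closedBall y (r/2) ∩ S) := by
    intro y
    have hfun : ∀ x : Fin n → ℝ, G (x, y) =
        (closedBall y (r/2)).indicator (fun _ => g y) x := by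
      intro x
      by_cases h : dist x y ≤ r/2
      · simp [hGdef, Set.indicator_apply, mem_closedBall, Set.mem_setOf_eq,
          dist_comm, h]
      · simp [hGdef, Set.indicator_apply, mem_closedBall, Set.mem_setOf_eq,
          dist_comm, h]
    calc ∫⁻ x in S, G (x, y) ∂μH[d]
        = ∫⁻ x in S, (closedBall y (r/2)).indicator (fun _ => g y) x ∂μH[d] :=
          lintegral_congr fun x => hfun x
      _ = ∫⁻ _ in closedBall y (r/2), g y ∂(μH[d].restrict S) :=
          lintegral_indicator measurableSet_closedBall _
      _ = g y * (μH[d].restrict S) (closedBall y (r/2)) := setLIntegral_const _ _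
      _ = g y * μH[d] (closedBall y (r/2) ∩ S) := by
          rw [Measure.restrict_apply measurableSet_closedBall]
  have hbound : ∀ y : Fin n → ℝ, μH[d] (closedBall y (r/2) ∩ S) ≤ M := by
    intro y
    rcases Set.eq_empty_or_nonempty (closedBall y (r/2) ∩ S) with he | ⟨w, hw1, hw2⟩
    · rw [he]; simp
    · have hsub2 : closedBall y (r/2) ∩ S ⊆ closedBall w r ∩ S := by
        rintro v ⟨hv1, hv2⟩
        refine ⟨mem_closedBall.2 ?_, hv2⟩
        have h1 : dist v y ≤ r/2 := mem_closedBall.1 hv1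
        have h2 : dist y w ≤ r/2 := by rw [dist_comm]; exact mem_closedBall.1 hw1
        calc dist v w ≤ dist v y + dist y w := dist_triangle _ _ _
          _ ≤ r := by linarith
      exact (measure_mono hsub2).trans (hreg w hw2 r hr hrle1).2
  set I : ℝ≥0∞ := ∫⁻ y, g y ∂volume with hIdef
  have main_int : ∫⁻ x in S, (⨅ q ∈ QS n k, Fq u f' x r q) ^ p ∂μH[d]
      ≤ (V⁻¹ * Kp) * (M * I) := by
    calc ∫⁻ x in S, (⨅ q ∈ QS n k, Fq u f' x r q) ^ p ∂μH[d]
        ≤ ∫⁻ x in S, (V⁻¹ * Kp) * ∫⁻ y in closedBall x (r/2), g y ∂volume ∂μH[d] :=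
          lintegral_mono fun x => step1 x
      _ = (V⁻¹ * Kp) * ∫⁻ x in S, ∫⁻ y in closedBall x (r/2), g y ∂volume ∂μH[d] :=
          lintegral_const_mul' _ _
            (ENNReal.mul_ne_top (ENNReal.inv_ne_top.2 hV0) hKpT)
      _ = (V⁻¹ * Kp) * ∫⁻ y, g y * μH[d] (closedBall y (r/2) ∩ S) ∂volume := by
          rw [show (∫⁻ x in S, ∫⁻ y in closedBall x (r/2), g y ∂volume ∂μH[d])
            = ∫⁻ x in S, ∫⁻ y, G (x, y) ∂volume ∂μH[d] from
              lintegral_congr fun x => hGinner x, hswap]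
          congr 1
          exact lintegral_congr fun y => hinner y
      _ ≤ (V⁻¹ * Kp) * ∫⁻ y, g y * M ∂volume :=
          mul_le_mul_right (lintegral_mono fun y => mul_le_mul_right (hbound y) _) _
      _ = (V⁻¹ * Kp) * (M * I) := by
          rw [lintegral_mul_const M hg, hIdef, mul_comm I M]
  -- constant computation
  have hE : V⁻¹ * M = c₂ * ENNReal.ofReal ((2:ℝ) ^ ((i:ℝ) * ((n:ℝ) - d))) := by
    have h1 : (ENNReal.ofReal r) ^ d = ENNReal.ofReal (r ^ d) :=
      ENNReal.ofReal_rpow_of_pos hr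
    have h2 : (r:ℝ) ^ n = r ^ ((n:ℕ):ℝ) := (Real.rpow_natCast r n).symm
    have h3 : (0:ℝ) < r ^ ((n:ℕ):ℝ) := Real.rpow_pos_of_pos hr _
    have h4 : V⁻¹ * M = c₂ * (ENNReal.ofReal (r ^ d) / ENNReal.ofReal (r ^ ((n:ℕ):ℝ))) := by
      rw [hMdef, hVdef, h1, h2, ENNReal.div_eq_inv_mul]
      ring
    rw [h4, ← ENNReal.ofReal_div_of_pos h3, ← Real.rpow_sub hr]
    congr 2
    have hr2 : r = (2:ℝ) ^ (-(i:ℝ)) := by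
      rw [hrdef, ← Real.rpow_intCast 2 (-(i:ℤ))]
      norm_num
    rw [hr2, ← Real.rpow_mul (by norm_num : (0:ℝ) ≤ 2)]
    congr 1
    ring
  have hconst : (V⁻¹ * Kp * M) ^ (1/p) =
      K * c₂ ^ (1/p) * ENNReal.ofReal ((2:ℝ) ^ ((i:ℝ) * ((n:ℝ) - d) / p)) := by
    have hKpp : Kp ^ (1/p) = K := by
      rw [hKp, ← ENNReal.rpow_mul, mul_one_div, div_self hp0.ne', ENNReal.rpow_one]
    have hEe : ENNReal.ofReal ((2:ℝ) ^ ((i:ℝ) * ((n:ℝ) - d))) ^ (1/p)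
        = ENNReal.ofReal ((2:ℝ) ^ ((i:ℝ) * ((n:ℝ) - d) / p)) := by
      rw [ENNReal.ofReal_rpow_of_pos (Real.rpow_pos_of_pos (by norm_num) _),
        ← Real.rpow_mul (by norm_num : (0:ℝ) ≤ 2), mul_one_div]
    calc (V⁻¹ * Kp * M) ^ (1/p)
        = (Kp * (c₂ * ENNReal.ofReal ((2:ℝ) ^ ((i:ℝ) * ((n:ℝ) - d))))) ^ (1/p) := by
          rw [show V⁻¹ * Kp * M = Kp * (V⁻¹ * M) by ring, hE]
      _ = Kp ^ (1/p) * (c₂ ^ (1/p) *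
            ENNReal.ofReal ((2:ℝ) ^ ((i:ℝ) * ((n:ℝ) - d))) ^ (1/p)) := by
          rw [ENNReal.mul_rpow_of_nonneg _ _ (by positivity : (0:ℝ) ≤ 1/p),
            ENNReal.mul_rpow_of_nonneg _ _ (by positivity : (0:ℝ) ≤ 1/p)]
      _ = K * c₂ ^ (1/p) * ENNReal.ofReal ((2:ℝ) ^ ((i:ℝ) * ((n:ℝ) - d) / p)) := by
          rw [hKpp, hEe, mul_assoc]
  -- final chain
  calc (∫⁻ x in S, (locApproxRn n k u f x r) ^ p ∂μH[d]) ^ (1/p)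
      = (∫⁻ x in S, (⨅ q ∈ QS n k, Fq u f' x r q) ^ p ∂μH[d]) ^ (1/p) := by
        congr 1
        exact lintegral_congr fun x => by
          rw [locApprox_congr_ae hae, locApprox_eq]
    _ ≤ ((V⁻¹ * Kp) * (M * I)) ^ (1/p) := ENNReal.rpow_le_rpow main_int (by positivity)
    _ = (V⁻¹ * Kp * M) ^ (1/p) * I ^ (1/p) := by
        rw [show (V⁻¹ * Kp) * (M * I) = (V⁻¹ * Kp * M) * I by ring,
          ENNReal.mul_rpow_of_nonneg _ _ (by positivity : (0:ℝ) ≤ 1/p)]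
    _ = K * c₂ ^ (1/p) * ENNReal.ofReal ((2:ℝ) ^ ((i:ℝ) * ((n:ℝ) - d) / p)) * I ^ (1/p) := by
        rw [hconst]
    _ = K * c₂ ^ (1/p) * ENNReal.ofReal ((2:ℝ) ^ ((i:ℝ) * ((n:ℝ) - d) / p)) *
          (∫⁻ x, (locApproxRn n k u f x ((2:ℝ) ^ (-(i:ℤ) + 2))) ^ p ∂volume) ^ (1/p) := by
        congr 2
        rw [hIdef]
        exact lintegral_congr fun y => by
          rw [h4r, locApprox_congr_ae hae, locApprox_eq, hgdef]
end
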